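/- Let A₁ and A₂ be weighted automata over V. Then the behavior of their concatenation is the convolution of their behaviors: for every valuation σ : V → ℕ, ⟦A₁ • A₂⟧ σ = ∑' over pairs (σ₁, σ₂) of valuations with σ₁ + σ₂ = σ of ⟦A₁⟧ σ₁ * ⟦A₂⟧ σ₂. -/

import Mathlib

open scoped ENNReal
open Classical

/-- Weighted automata over a commutative alphabet `V` with weights in `ℝ≥0∞`. -/
structure WA (V : Type) where
  Q : Type
  [fin : Fintype Q]
  [dec : DecidableEq Q]
  w : Q → Q → ℝ≥0∞
  lab : Q → Q → Option V
  I : Q → ℝ≥0∞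
  F : Q → ℝ≥0∞

attribute [instance] WA.fin WA.dec

variable {V : Type} [Fintype V] [DecidableEq V]

/-- Weight of a path of length `n`. -/
noncomputable def WA.pathWeight (A : WA V) {n : ℕ} (p : Fin (n + 1) → A.Q) : ℝ≥0∞ :=
  A.I (p 0) * (∏ i : Fin n, A.w (p i.castSucc) (p i.succ)) * A.F (p (Fin.last n))

/-- Parikh image of a path: the number of `X`-labeled transitions, for each `X : V`. -/
def WA.parikh (A : WA V) {n : ℕ} (p : Fin (n + 1) → A.Q) : V → ℕ := fun X =>
  (Finset.univ.filter fun i : Fin n => A.lab (p i.castSucc) (p i.succ) = some X).card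

/-- Behavior of a weighted automaton, as a map from valuations to `ℝ≥0∞`. -/
noncomputable def WA.behavior (A : WA V) (σ : V → ℕ) : ℝ≥0∞ :=
  ∑' (n : ℕ) (p : {p : Fin (n + 1) → A.Q // A.parikh p = σ}), A.pathWeight p.1

/-- Total mass of a weighted automaton. -/
noncomputable def WA.mass (A : WA V) : ℝ≥0∞ :=
  ∑' σ : V → ℕ, A.behavior σ

/-- Number of transitions with nonzero weight. -/
noncomputable def WA.size (A : WA V) : ℕ :=
  Nat.card {qr : A.Q × A.Q // A.w qr.1 qr.2 ≠ 0}

/-- Deterministic finite automata over alphabet `V` with a finite state type. -/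
structure DFA' (V : Type) where
  S : Type
  [fin : Fintype S]
  [dec : DecidableEq S]
  step : S → V → S
  start : S
  accept : Finset S

attribute [instance] DFA'.fin DFA'.dec

def DFA'.Accepts (B : DFA' V) (w : List V) : Prop :=
  w.foldl B.step B.start ∈ B.accept

/-- The language of `B` is closed under permutations of letters. -/
def DFA'.PermClosed (B : DFA' V) : Prop :=
  ∀ w₁ w₂ : List V, w₁.Perm w₂ → (B.Accepts w₁ ↔ B.Accepts w₂)

/-- Parikh image of a word. -/
def parikhWord (w : List V) : V → ℕ := fun X => w.count X

/-- Product of a weighted automaton with a DFA. -/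
noncomputable def WA.prodDFA (A : WA V) (B : DFA' V) : WA V where
  Q := A.Q × B.S
  w := fun a b =>
    match A.lab a.1 b.1 with
    | some X => if b.2 = B.step a.2 X then A.w a.1 b.1 else 0
    | none => if b.2 = a.2 then A.w a.1 b.1 else 0
  lab := fun a b => A.lab a.1 b.1
  I := fun a => if a.2 = B.start then A.I a.1 else 0
  F := fun a => if a.2 ∈ B.accept then A.F a.1 else 0

/-- `A[X/1]`: relabel every `X`-transition to an `ε`-transition. -/
def WA.subst1 (A : WA V) (X : V) : WA V :=
  { A with lab := fun q r => if A.lab q r = some X then none else A.lab q r }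

/-- `A[X/0]`: set the weight of every `X`-labeled transition to `0`. -/
def WA.subst0 (A : WA V) (X : V) : WA V :=
  { A with w := fun q r => if A.lab q r = some X then 0 else A.w q r }

/-- Weighted disjoint union `A₁ ⊕_{p,q} A₂`. -/
noncomputable def WA.wsum (p q : ℝ≥0∞) (A₁ A₂ : WA V) : WA V where
  Q := A₁.Q ⊕ A₂.Q
  w := fun a b =>
    match a, b with
    | .inl q, .inl r => A₁.w q r
    | .inr q, .inr r => A₂.w q r
    | _, _ => 0
  lab := fun a b =>
    match a, b with
    | .inl q, .inl r => A₁.lab q r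
    | .inr q, .inr r => A₂.lab q r
    | _, _ => none
  I := Sum.elim (fun s => p * A₁.I s) (fun s => q * A₂.I s)
  F := Sum.elim A₁.F A₂.F

/-- Concatenation `A₁ • A₂`. -/
noncomputable def WA.concat (A₁ A₂ : WA V) : WA V where
  Q := A₁.Q ⊕ A₂.Q
  w := fun a b =>
    match a, b with
    | .inl q, .inl r => A₁.w q r
    | .inr s, .inr t => A₂.w s t
    | .inl q, .inr s => A₁.F q * A₂.I s
    | .inr _, .inl _ => 0
  lab := fun a b =>
    match a, b with
    | .inl q, .inl r => A₁.lab q r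
    | .inr s, .inr t => A₂.lab s t
    | _, _ => none
  I := Sum.elim A₁.I (fun _ => 0)
  F := Sum.elim (fun _ => 0) A₂.F

/-- Transition substitution `A₁[Y/A₂]`. -/
noncomputable def WA.tsubst (A₁ : WA V) (Y : V) (A₂ : WA V) : WA V where
  Q := A₁.Q ⊕ (A₁.Q × A₁.Q × A₂.Q)
  w := fun a b =>
    match a, b with
    | .inl q, .inl r => if A₁.lab q r = some Y then 0 else A₁.w q r
    | .inl q, .inr (q', r, s) =>
        if q' = q ∧ A₁.lab q r = some Y then A₁.w q r * A₂.I s else 0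
    | .inr (q, r, s), .inr (q', r', t) =>
        if q' = q ∧ r' = r then A₂.w s t else 0
    | .inr (q, r, s), .inl r' =>
        if r' = r ∧ A₁.lab q r = some Y then A₂.F s else 0
  lab := fun a b =>
    match a, b with
    | .inl q, .inl r => A₁.lab q r
    | .inr (_, _, s), .inr (_, _, t) => A₂.lab s t
    | _, _ => none
  I := Sum.elim A₁.I (fun _ => 0)
  F := Sum.elim A₁.F (fun _ => 0)

/-- The guard DFA `B_{X>0}`. -/
def BXpos (X : V) : DFA' V where
  S := Bool
  step := fun s a => if a = X then true else s
  start := false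
  accept := {true}

/-- The decrement automaton `A^{X--}`. -/
noncomputable def WA.decrA (A : WA V) (X : V) : WA V :=
  let P := A.prodDFA (BXpos X)
  WA.wsum 1 1
    { P with
      lab := fun a b =>
        if a.2 = false ∧ b.2 = true ∧ P.lab a b = some X then none else P.lab a b }
    (A.subst0 X)

/-- Convolution of two maps `(V → ℕ) → ℝ≥0∞`. -/
noncomputable def conv (f g : (V → ℕ) → ℝ≥0∞) : (V → ℕ) → ℝ≥0∞ := fun σ =>
  ∑' p : {p : (V → ℕ) × (V → ℕ) // p.1 + p.2 = σ}, f p.1.1 * g p.1.2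

/-- Indicator (Dirac) function of a valuation. -/
noncomputable def delta (τ : V → ℕ) : (V → ℕ) → ℝ≥0∞ := fun σ => if σ = τ then 1 else 0

/-- `k`-fold convolution power. -/
noncomputable def convPow (g : (V → ℕ) → ℝ≥0∞) : ℕ → ((V → ℕ) → ℝ≥0∞)
  | 0 => delta 0
  | k + 1 => conv (convPow g k) g

/-- Rectangular guards over `V`. -/
inductive Guard (V : Type) : Type where
  | lt : V → ℕ → Guard V
  | mod : V → (n m : ℕ) → n < m → Guard V
  | and : Guard V → Guard V → Guard V
  | not : Guard V → Guard V

/-- Satisfaction of a guard by a valuation. -/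
def Guard.sat : Guard V → (V → ℕ) → Prop
  | .lt X n, σ => σ X < n
  | .mod X n m _, σ => σ X % m = n
  | .and g₁ g₂, σ => g₁.sat σ ∧ g₂.sat σ
  | .not g, σ => ¬g.sat σ

/-- Number of atomic subformulas. -/
def Guard.atoms : Guard V → ℕ
  | .lt _ _ => 1
  | .mod _ _ _ _ => 1
  | .and g₁ g₂ => g₁.atoms + g₂.atoms
  | .not g => g.atoms

/-- All constants in the guard are at most `N`. -/
def Guard.constLe (N : ℕ) : Guard V → Prop
  | .lt _ n => n ≤ N
  | .mod _ n m _ => n ≤ N ∧ m ≤ N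
  | .and g₁ g₂ => g₁.constLe N ∧ g₂.constLe N
  | .not g => g.constLe N

/-- The counting DFA for `X < n`. -/
def ltDFA (X : V) (n : ℕ) : DFA' V where
  S := Fin (n + 1)
  step := fun s a => if a = X then (if h : s.1 < n then ⟨s.1 + 1, by omega⟩ else s) else s
  start := ⟨0, by omega⟩
  accept := Finset.univ.filter fun s => s.1 < n

/-- The counting DFA for `X ≡ n mod m`. -/
def modDFA (X : V) (n m : ℕ) (h : n < m) : DFA' V where
  S := Fin m
  step := fun s a => if a = X then ⟨(s.1 + 1) % m, Nat.mod_lt _ (by omega)⟩ else s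
  start := ⟨0, by omega⟩
  accept := {⟨n, h⟩}

/-- Product DFA. -/
def DFA'.inter (B C : DFA' V) : DFA' V where
  S := B.S × C.S
  step := fun s a => (B.step s.1 a, C.step s.2 a)
  start := (B.start, C.start)
  accept := B.accept ×ˢ C.accept

/-- Complement DFA. -/
def DFA'.compl (B : DFA' V) : DFA' V :=
  { B with accept := B.acceptᶜ }

/-- The guard DFA `B_φ`. -/
def Guard.dfa : Guard V → DFA' V
  | .lt X n => ltDFA X n
  | .mod X n m h => modDFA X n m h
  | .and g₁ g₂ => g₁.dfa.inter g₂.dfa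
  | .not g => g.dfa.compl

/-- Loop-free ReDiP programs; distributions are given by weighted automata. -/
inductive ReDiP (V : Type) : Type 1 where
  | setzero : V → ReDiP V
  | incrConst : V → ℕ → ReDiP V
  | incrDist : V → WA V → ReDiP V
  | incrVar : V → V → ReDiP V
  | iid : V → WA V → V → ReDiP V
  | decr : V → ReDiP V
  | choice : ℝ≥0∞ → ReDiP V → ReDiP V → ReDiP V
  | ite : Guard V → ReDiP V → ReDiP V → ReDiP V
  | observe : Guard V → ReDiP V
  | seq : ReDiP V → ReDiP V → ReDiP V

/-- A distribution automaton for variable `x`: mass exactly `1` and supported on `x`. -/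
def distWf (x : V) (D : WA V) : Prop :=
  D.mass = 1 ∧ ∀ σ : V → ℕ, D.behavior σ ≠ 0 → ∀ y : V, y ≠ x → σ y = 0

/-- Well-formedness of a ReDiP program. -/
def ReDiP.wf : ReDiP V → Prop
  | .incrDist x D => distWf x D
  | .iid x D _ => distWf x D
  | .choice p P₁ P₂ => p ≤ 1 ∧ P₁.wf ∧ P₂.wf
  | .ite _ P₁ P₂ => P₁.wf ∧ P₂.wf
  | .seq P₁ P₂ => P₁.wf ∧ P₂.wf
  | _ => True

/-- `P` contains no `iid` statements. -/
def ReDiP.noIid : ReDiP V → Prop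
  | .iid _ _ _ => False
  | .choice _ P₁ P₂ => P₁.noIid ∧ P₂.noIid
  | .ite _ P₁ P₂ => P₁.noIid ∧ P₂.noIid
  | .seq P₁ P₂ => P₁.noIid ∧ P₂.noIid
  | _ => True

/-- Program size. -/
def ReDiP.size : ReDiP V → ℕ
  | .choice _ P₁ P₂ => 1 + P₁.size + P₂.size
  | .ite _ P₁ P₂ => 1 + P₁.size + P₂.size
  | .seq P₁ P₂ => P₁.size + P₂.size
  | _ => 1

/-- The `(n+1)`-state chain of `X`-transitions (Dirac distribution `δ_n` on `X`). -/
noncomputable def chainX (X : V) (n : ℕ) : WA V where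
  Q := Fin (n + 1)
  w := fun i j => if j.1 = i.1 + 1 then 1 else 0
  lab := fun i j => if j.1 = i.1 + 1 then some X else none
  I := fun i => if i = ⟨0, by omega⟩ then 1 else 0
  F := fun i => if i = Fin.last n then 1 else 0

/-- The three-state chain with one `Y`-transition followed by one `X`-transition. -/
noncomputable def chainYX (Y X : V) : WA V where
  Q := Fin 3
  w := fun i j => if j.1 = i.1 + 1 then 1 else 0
  lab := fun i j => if j.1 = i.1 + 1 then (if i.1 = 0 then some Y else some X) else none
  I := fun i => if i = 0 then 1 else 0
  F := fun i => if i = Fin.last 2 then 1 else 0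

/-- The two-state automaton with a single `Y`-transition. -/
noncomputable def singleY (Y : V) : WA V := chainX Y 1

/-- The automata translation of a ReDiP program (Table 2). -/
noncomputable def ReDiP.sem : ReDiP V → WA V → WA V
  | .setzero x, A => A.subst1 x
  | .incrConst x n, A => A.concat (chainX x n)
  | .incrDist _ D, A => A.concat D
  | .incrVar x y, A => A.tsubst y (chainYX y x)
  | .iid _ D y, A => A.tsubst y ((singleY y).concat D)
  | .decr x, A => A.decrA x
  | .choice p P₁ P₂, A => WA.wsum p (1 - p) (P₁.sem A) (P₂.sem A)
  | .ite φ P₁ P₂, A =>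
      WA.wsum 1 1 (P₁.sem (A.prodDFA φ.dfa)) (P₂.sem (A.prodDFA (Guard.not φ).dfa))
  | .observe φ, A => A.prodDFA φ.dfa
  | .seq P₁ P₂, A => P₂.sem (P₁.sem A)

/-- The parameters (distribution automata sizes, constants, guard atoms) of `P` are
bounded by `d`, `N` and `η`, respectively. -/
def ReDiP.boundedBy (d N η : ℕ) : ReDiP V → Prop
  | .setzero _ => True
  | .incrConst _ n => n ≤ N
  | .incrDist _ D => D.size ≤ d
  | .incrVar _ _ => True
  | .iid _ D _ => D.size ≤ d
  | .decr _ => True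
  | .choice _ P₁ P₂ => P₁.boundedBy d N η ∧ P₂.boundedBy d N η
  | .ite φ P₁ P₂ =>
      φ.atoms ≤ η ∧ φ.constLe N ∧ P₁.boundedBy d N η ∧ P₂.boundedBy d N η
  | .observe φ => φ.atoms ≤ η ∧ φ.constLe N
  | .seq P₁ P₂ => P₁.boundedBy d N η ∧ P₂.boundedBy d N η

/-- Configurations of the operational Markov chain. -/
inductive Conf (V : Type) : Type 1 where
  | run : ReDiP V → (V → ℕ) → Conf V
  | term : (V → ℕ) → Conf V
  | err : Conf V

/-- One-step transition probabilities of the operational Markov chain from `⟨P, σ⟩`. -/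
noncomputable def pstep : ReDiP V → (V → ℕ) → Conf V → ℝ≥0∞
  | .setzero x, σ, c => if c = Conf.term (Function.update σ x 0) then 1 else 0
  | .incrConst x n, σ, c => if c = Conf.term (Function.update σ x (σ x + n)) then 1 else 0
  | .incrDist x D, σ, c =>
      ∑' n : ℕ,
        if c = Conf.term (Function.update σ x (σ x + n)) then
          D.behavior (fun y => if y = x then n else 0)
        else 0
  | .incrVar x y, σ, c => if c = Conf.term (Function.update σ x (σ x + σ y)) then 1 else 0
  | .iid _ _ _, _, _ => 0
  | .decr x, σ, c => if c = Conf.term (Function.update σ x (σ x - 1)) then 1 else 0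
  | .choice p P₁ P₂, σ, c =>
      (if c = Conf.run P₁ σ then p else 0) + (if c = Conf.run P₂ σ then 1 - p else 0)
  | .ite φ P₁ P₂, σ, c =>
      if φ.sat σ then (if c = Conf.run P₁ σ then 1 else 0)
      else (if c = Conf.run P₂ σ then 1 else 0)
  | .observe φ, σ, c =>
      if φ.sat σ then (if c = Conf.term σ then 1 else 0)
      else (if c = Conf.err then 1 else 0)
  | .seq P₁ P₂, σ, c =>
      match c with
      | .run Q σ' =>
          (if Q = P₂ then pstep P₁ σ (Conf.term σ') else 0) +
          (match Q with
           | .seq P₁' P₂' => if P₂' = P₂ then pstep P₁ σ (Conf.run P₁' σ') else 0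
           | _ => 0)
      | .term _ => 0
      | .err => pstep P₁ σ Conf.err

/-- Transition probabilities between configurations (terminal and error states are absorbing
with no outgoing transitions). -/
noncomputable def cstep : Conf V → Conf V → ℝ≥0∞
  | .run P σ, c => pstep P σ c
  | _, _ => 0

/-- Initial distribution of the operational Markov chain `M(A, P)`. -/
noncomputable def mcInit (A : WA V) (P : ReDiP V) : Conf V → ℝ≥0∞
  | .run P' σ => if P' = P then A.behavior σ else 0
  | _ => 0

/-- Reachability probability `Pr^{M(A,P)}(◇ t)`: the sum over all finite sequences of
configurations ending at `t` and avoiding `t` before, of the initial weight of the first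
configuration times the product of the transition probabilities. -/
noncomputable def reachProb (A : WA V) (P : ReDiP V) (t : Conf V) : ℝ≥0∞ :=
  ∑' (k : ℕ)
      (p : {p : Fin (k + 1) → Conf V //
            p (Fin.last k) = t ∧ ∀ i : Fin k, p i.castSucc ≠ t}),
    mcInit A P (p.1 0) * ∏ i : Fin k, cstep (p.1 i.castSucc) (p.1 i.succ)

section ConcatAux

variable {V : Type} [Fintype V] [DecidableEq V]

/-- Clamped extension of a path to `ℕ`. -/
def ext1 {Q : Type} {n : ℕ} (q : Fin (n + 1) → Q) : ℕ → Q :=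
  fun j => q ⟨min j n, Nat.lt_succ_of_le (Nat.min_le_right _ _)⟩

lemma ext1_le {Q : Type} {n : ℕ} (q : Fin (n + 1) → Q) {j : ℕ} (hj : j ≤ n) (h : j < n + 1) :
    ext1 q j = q ⟨j, h⟩ := by
  unfold ext1
  congr 1
  exact Fin.ext (by simp [hj])

lemma ext1_fin {Q : Type} {n : ℕ} (q : Fin (n + 1) → Q) (i : Fin (n + 1)) :
    ext1 q i.1 = q i := by
  rw [ext1_le q (Nat.lt_succ_iff.mp i.isLt) i.isLt]

lemma pathWeight_range (A : WA V) {n : ℕ} (q : Fin (n + 1) → A.Q) :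
    A.pathWeight q =
      A.I (ext1 q 0) * (∏ j ∈ Finset.range n, A.w (ext1 q j) (ext1 q (j + 1))) *
        A.F (ext1 q n) := by
  have h0 : ext1 q 0 = q 0 := by
    rw [ext1_le q (Nat.zero_le n) (Nat.succ_pos n)]; congr 1
  have hn : ext1 q n = q (Fin.last n) := ext1_fin q (Fin.last n)
  rw [WA.pathWeight, h0, hn]
  congr 2
  rw [← Fin.prod_univ_eq_prod_range (fun j => A.w (ext1 q j) (ext1 q (j + 1))) n]
  refine Finset.prod_congr rfl fun i _ => ?_
  rw [← ext1_fin q i.castSucc, ← ext1_fin q i.succ]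
  rfl

lemma parikh_range (A : WA V) {n : ℕ} (q : Fin (n + 1) → A.Q) (X : V) :
    A.parikh q X =
      ∑ j ∈ Finset.range n,
        (if A.lab (ext1 q j) (ext1 q (j + 1)) = some X then 1 else 0) := by
  rw [WA.parikh, Finset.card_filter]
  rw [← Fin.sum_univ_eq_sum_range
    (fun j => if A.lab (ext1 q j) (ext1 q (j + 1)) = some X then 1 else 0) n]
  refine Finset.sum_congr rfl fun i _ => ?_
  rw [← ext1_fin q i.castSucc, ← ext1_fin q i.succ]
  rfl

/-- Gluing a pair of paths into a path of the concatenation, as a `ℕ`-indexed function. -/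
def glue {Q₁ Q₂ : Type} (n₁ n₂ : ℕ) (q₁ : Fin (n₁ + 1) → Q₁) (q₂ : Fin (n₂ + 1) → Q₂) :
    ℕ → Q₁ ⊕ Q₂ :=
  fun j => if j ≤ n₁ then Sum.inl (ext1 q₁ j) else Sum.inr (ext1 q₂ (j - (n₁ + 1)))

/-- The glued path. -/
def gpath (A₁ A₂ : WA V) (n₁ n₂ : ℕ) (q₁ : Fin (n₁ + 1) → A₁.Q) (q₂ : Fin (n₂ + 1) → A₂.Q) :
    Fin (n₁ + n₂ + 1 + 1) → (A₁.concat A₂).Q :=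
  fun i => glue n₁ n₂ q₁ q₂ i.1

lemma ext1_gpath (A₁ A₂ : WA V) (n₁ n₂ : ℕ) (q₁ : Fin (n₁ + 1) → A₁.Q)
    (q₂ : Fin (n₂ + 1) → A₂.Q) {j : ℕ} (hj : j ≤ n₁ + n₂ + 1) :
    ext1 (gpath A₁ A₂ n₁ n₂ q₁ q₂) j = glue n₁ n₂ q₁ q₂ j := by
  rw [ext1_le _ hj (by omega)]
  rfl

lemma glue_left {Q₁ Q₂ : Type} (n₁ n₂ : ℕ) (q₁ : Fin (n₁ + 1) → Q₁) (q₂ : Fin (n₂ + 1) → Q₂)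
    {j : ℕ} (hj : j ≤ n₁) : glue n₁ n₂ q₁ q₂ j = Sum.inl (ext1 q₁ j) := by
  simp [glue, hj]

lemma glue_right {Q₁ Q₂ : Type} (n₁ n₂ : ℕ) (q₁ : Fin (n₁ + 1) → Q₁) (q₂ : Fin (n₂ + 1) → Q₂)
    (j : ℕ) : glue n₁ n₂ q₁ q₂ (n₁ + 1 + j) = Sum.inr (ext1 q₂ j) := by
  have h1 : ¬ (n₁ + 1 + j ≤ n₁) := by omega
  have h2 : n₁ + 1 + j - (n₁ + 1) = j := by omega
  simp [glue, h1, h2]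

lemma pathWeight_gpath (A₁ A₂ : WA V) (n₁ n₂ : ℕ) (q₁ : Fin (n₁ + 1) → A₁.Q)
    (q₂ : Fin (n₂ + 1) → A₂.Q) :
    (A₁.concat A₂).pathWeight (gpath A₁ A₂ n₁ n₂ q₁ q₂) =
      A₁.pathWeight q₁ * A₂.pathWeight q₂ := by
  rw [pathWeight_range, pathWeight_range, pathWeight_range]
  have e0 : ext1 (gpath A₁ A₂ n₁ n₂ q₁ q₂) 0 = Sum.inl (ext1 q₁ 0) := by
    rw [ext1_gpath _ _ _ _ _ _ (by omega), glue_left _ _ _ _ (by omega)]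
  have elast : ext1 (gpath A₁ A₂ n₁ n₂ q₁ q₂) (n₁ + n₂ + 1) = Sum.inr (ext1 q₂ n₂) := by
    rw [ext1_gpath _ _ _ _ _ _ (le_refl _), show n₁ + n₂ + 1 = n₁ + 1 + n₂ by omega,
      glue_right]
  have eprod : (∏ j ∈ Finset.range (n₁ + n₂ + 1),
        (A₁.concat A₂).w (ext1 (gpath A₁ A₂ n₁ n₂ q₁ q₂) j)
          (ext1 (gpath A₁ A₂ n₁ n₂ q₁ q₂) (j + 1)))
      = (∏ j ∈ Finset.range n₁, A₁.w (ext1 q₁ j) (ext1 q₁ (j + 1)))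
        * (A₁.F (ext1 q₁ n₁) * A₂.I (ext1 q₂ 0))
        * ∏ j ∈ Finset.range n₂, A₂.w (ext1 q₂ j) (ext1 q₂ (j + 1)) := by
    have hcongr : ∀ j ∈ Finset.range (n₁ + n₂ + 1),
        (A₁.concat A₂).w (ext1 (gpath A₁ A₂ n₁ n₂ q₁ q₂) j)
            (ext1 (gpath A₁ A₂ n₁ n₂ q₁ q₂) (j + 1))
          = (A₁.concat A₂).w (glue n₁ n₂ q₁ q₂ j) (glue n₁ n₂ q₁ q₂ (j + 1)) := by
      intro j hj
      rw [Finset.mem_range] at hj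
      rw [ext1_gpath _ _ _ _ _ _ (by omega), ext1_gpath _ _ _ _ _ _ (by omega)]
    rw [Finset.prod_congr rfl hcongr]
    rw [show n₁ + n₂ + 1 = (n₁ + 1) + n₂ by omega]
    rw [Finset.prod_range_add
      (fun j => (A₁.concat A₂).w (glue n₁ n₂ q₁ q₂ j) (glue n₁ n₂ q₁ q₂ (j + 1))) (n₁ + 1) n₂]
    rw [Finset.prod_range_succ]
    congr 1
    · congr 1
      · refine Finset.prod_congr rfl fun j hj => ?_
        rw [Finset.mem_range] at hj
        rw [glue_left _ _ _ _ (by omega : j ≤ n₁), glue_left _ _ _ _ (by omega : j + 1 ≤ n₁)]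
        rfl
      · rw [glue_left _ _ _ _ (le_refl n₁),
          show n₁ + 1 = n₁ + 1 + 0 by omega, glue_right]
        rfl
    · refine Finset.prod_congr rfl fun j hj => ?_
      rw [show n₁ + 1 + j + 1 = n₁ + 1 + (j + 1) by omega, glue_right, glue_right]
      rfl
  rw [e0, elast, eprod]
  show A₁.I (ext1 q₁ 0) * _ * A₂.F (ext1 q₂ n₂) = _
  ring

lemma parikh_gpath (A₁ A₂ : WA V) (n₁ n₂ : ℕ) (q₁ : Fin (n₁ + 1) → A₁.Q)
    (q₂ : Fin (n₂ + 1) → A₂.Q) :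
    (A₁.concat A₂).parikh (gpath A₁ A₂ n₁ n₂ q₁ q₂) = A₁.parikh q₁ + A₂.parikh q₂ := by
  funext X
  show _ = A₁.parikh q₁ X + A₂.parikh q₂ X
  rw [parikh_range, parikh_range, parikh_range]
  have hcongr : ∀ j ∈ Finset.range (n₁ + n₂ + 1),
      (if (A₁.concat A₂).lab (ext1 (gpath A₁ A₂ n₁ n₂ q₁ q₂) j)
            (ext1 (gpath A₁ A₂ n₁ n₂ q₁ q₂) (j + 1)) = some X then (1:ℕ) else 0)
        = (if (A₁.concat A₂).lab (glue n₁ n₂ q₁ q₂ j) (glue n₁ n₂ q₁ q₂ (j + 1)) = some X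
            then 1 else 0) := by
    intro j hj
    rw [Finset.mem_range] at hj
    rw [ext1_gpath _ _ _ _ _ _ (by omega), ext1_gpath _ _ _ _ _ _ (by omega)]
  rw [Finset.sum_congr rfl hcongr]
  rw [show n₁ + n₂ + 1 = (n₁ + 1) + n₂ by omega]
  rw [Finset.sum_range_add
    (fun j => if (A₁.concat A₂).lab (glue n₁ n₂ q₁ q₂ j) (glue n₁ n₂ q₁ q₂ (j + 1)) = some X
      then (1:ℕ) else 0) (n₁ + 1) n₂]
  rw [Finset.sum_range_succ]
  congr 1
  · have hmid : (if (A₁.concat A₂).lab (glue n₁ n₂ q₁ q₂ n₁) (glue n₁ n₂ q₁ q₂ (n₁ + 1)) = some X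
        then (1:ℕ) else 0) = 0 := by
      rw [glue_left _ _ _ _ (le_refl n₁), show n₁ + 1 = n₁ + 1 + 0 by omega, glue_right]
      simp [WA.concat]
    rw [hmid, add_zero]
    refine Finset.sum_congr rfl fun j hj => ?_
    rw [Finset.mem_range] at hj
    rw [glue_left _ _ _ _ (by omega : j ≤ n₁), glue_left _ _ _ _ (by omega : j + 1 ≤ n₁)]
    rfl
  · refine Finset.sum_congr rfl fun j hj => ?_
    rw [show n₁ + 1 + j + 1 = n₁ + 1 + (j + 1) by omega, glue_right, glue_right]
    rfl

end ConcatAux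
section ConcatAux2

variable {V : Type} [Fintype V] [DecidableEq V]

set_option linter.unusedSectionVars false

lemma decompose (A₁ A₂ : WA V) {n : ℕ} (p : Fin (n + 1) → (A₁.concat A₂).Q)
    (hW : (A₁.concat A₂).pathWeight p ≠ 0) :
    ∃ (n₁ n₂ : ℕ) (q₁ : Fin (n₁ + 1) → A₁.Q) (q₂ : Fin (n₂ + 1) → A₂.Q),
      n = n₁ + n₂ + 1 ∧ ∀ i : Fin (n + 1), p i = glue n₁ n₂ q₁ q₂ i.1 := by
  classical
  set E : ℕ → A₁.Q ⊕ A₂.Q := ext1 p with hE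
  rw [pathWeight_range] at hW
  have hI : (A₁.concat A₂).I (E 0) ≠ 0 := fun h => hW (by rw [show (A₁.concat A₂).I (ext1 p 0) = 0 from h, zero_mul, zero_mul])
  have hF : (A₁.concat A₂).F (E n) ≠ 0 := fun h => hW (by rw [show (A₁.concat A₂).F (ext1 p n) = 0 from h, mul_zero])
  have hw : ∀ j, j < n → (A₁.concat A₂).w (E j) (E (j + 1)) ≠ 0 := by
    intro j hj h
    apply hW
    rw [Finset.prod_eq_zero (Finset.mem_range.mpr hj) h, mul_zero, zero_mul]
  have h0 : (E 0).isLeft := by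
    rcases hx : E 0 with a | b
    · simp
    · exact absurd (hx ▸ rfl : (A₁.concat A₂).I (E 0) = 0) hI
  have hlast : (E n).isRight := by
    rcases hx : E n with a | b
    · exact absurd (hx ▸ rfl : (A₁.concat A₂).F (E n) = 0) hF
    · simp
  have hstep : ∀ j, j < n → (E j).isRight → (E (j + 1)).isRight := by
    intro j hj hR
    rcases hx : E (j + 1) with a | b
    · exfalso
      rcases Sum.isRight_iff.mp hR with ⟨b', hb'⟩
      exact hw j hj (by rw [hb', hx]; rfl)
    · simp
  have hex : ∃ j, j ≤ n ∧ (E j).isRight := ⟨n, le_refl n, hlast⟩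
  set m := Nat.find hex with hm
  obtain ⟨hmn, hmR⟩ := Nat.find_spec hex
  rw [← hm] at hmn hmR
  have hL : ∀ j, j < m → (E j).isLeft := by
    intro j hj
    have h1 := Nat.find_min hex hj
    rw [not_and] at h1
    exact Sum.not_isRight.mp (h1 (by omega))
  have hm0 : 1 ≤ m := by
    rcases Nat.eq_zero_or_pos m with h | h
    · exfalso
      rw [h] at hmR
      rcases hx : E 0 with a | b
      · rw [hx] at hmR; simp at hmR
      · rw [hx] at h0; simp at h0
    · exact h
  have hup : ∀ j, m ≤ j → j ≤ n → (E j).isRight := by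
    intro j hmj hjn
    induction j, hmj using Nat.le_induction with
    | base => exact hmR
    | succ k hk ih => exact hstep k (by omega) (ih (by omega))
  obtain ⟨a0, ha0⟩ := Sum.isLeft_iff.mp h0
  obtain ⟨b0, hb0⟩ := Sum.isRight_iff.mp hmR
  set q₁ : Fin (m - 1 + 1) → A₁.Q := fun i => Sum.elim id (fun _ => a0) (E i.1) with hq₁
  set q₂ : Fin (n - m + 1) → A₂.Q := fun i => Sum.elim (fun _ => b0) id (E (m + i.1)) with hq₂
  have key : ∀ j, j ≤ n → E j = glue (m - 1) (n - m) q₁ q₂ j := by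
    intro j hj
    by_cases hjm : j ≤ m - 1
    · rw [glue_left _ _ _ _ hjm, ext1_le q₁ hjm (by omega), hq₁]
      show E j = Sum.inl (Sum.elim id (fun _ => a0) (E j))
      rcases Sum.isLeft_iff.mp (hL j (by omega)) with ⟨a, ha⟩
      rw [ha]; rfl
    · rw [show glue (m - 1) (n - m) q₁ q₂ j = Sum.inr (ext1 q₂ (j - (m - 1 + 1))) from
        by simp [glue, hjm]]
      rw [show j - (m - 1 + 1) = j - m from by omega]
      rw [ext1_le q₂ (by omega) (by omega), hq₂]
      show E j = Sum.inr (Sum.elim (fun _ => b0) id (E (m + (j - m))))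
      rw [show m + (j - m) = j from by omega]
      rcases Sum.isRight_iff.mp (hup j (by omega) hj) with ⟨b, hb⟩
      rw [hb]; rfl
  refine ⟨m - 1, n - m, q₁, q₂, by omega, fun i => ?_⟩
  rw [← ext1_fin p i]
  exact key i.1 (Nat.lt_succ_iff.mp i.isLt)

end ConcatAux2
section ConcatAux3

variable {V : Type} [Fintype V] [DecidableEq V]

set_option linter.unusedSectionVars false

abbrev PIdx (A₁ A₂ : WA V) (σ : V → ℕ) : Type :=
  Σ n : ℕ, {p : Fin (n + 1) → (A₁.concat A₂).Q // (A₁.concat A₂).parikh p = σ}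

abbrev QIdx (A₁ A₂ : WA V) (σ : V → ℕ) : Type :=
  Σ n₁ : ℕ, Σ n₂ : ℕ,
    {q : (Fin (n₁ + 1) → A₁.Q) × (Fin (n₂ + 1) → A₂.Q) //
      A₁.parikh q.1 + A₂.parikh q.2 = σ}

noncomputable def pfn (A₁ A₂ : WA V) (σ : V → ℕ) (x : PIdx A₁ A₂ σ) : ℝ≥0∞ :=
  (A₁.concat A₂).pathWeight x.2.1

noncomputable def qfn (A₁ A₂ : WA V) (σ : V → ℕ) (y : QIdx A₁ A₂ σ) : ℝ≥0∞ :=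
  A₁.pathWeight y.2.2.1.1 * A₂.pathWeight y.2.2.1.2

def embed (A₁ A₂ : WA V) (σ : V → ℕ) (y : QIdx A₁ A₂ σ) : PIdx A₁ A₂ σ :=
  ⟨y.1 + y.2.1 + 1, ⟨gpath A₁ A₂ y.1 y.2.1 y.2.2.1.1 y.2.2.1.2, by
    rw [parikh_gpath]; exact y.2.2.2⟩⟩

lemma pfn_embed (A₁ A₂ : WA V) (σ : V → ℕ) (y : QIdx A₁ A₂ σ) :
    pfn A₁ A₂ σ (embed A₁ A₂ σ y) = qfn A₁ A₂ σ y := by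
  rcases y with ⟨n₁, n₂, ⟨⟨q₁, q₂⟩, hq⟩⟩
  exact pathWeight_gpath A₁ A₂ n₁ n₂ q₁ q₂

lemma embed_inj (A₁ A₂ : WA V) (σ : V → ℕ) : Function.Injective (embed A₁ A₂ σ) := by
  rintro ⟨n₁, n₂, ⟨⟨q₁, q₂⟩, hq⟩⟩ ⟨m₁, m₂, ⟨⟨r₁, r₂⟩, hr⟩⟩ h
  have h2 : ∀ j, j ≤ n₁ + n₂ + 1 → j ≤ m₁ + m₂ + 1 →
      glue n₁ n₂ q₁ q₂ j = glue m₁ m₂ r₁ r₂ j := by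
    intro j hj hj'
    have h3 := congrArg (fun x : PIdx A₁ A₂ σ => ext1 x.2.1 j) h
    simp only [embed] at h3
    rw [ext1_gpath _ _ _ _ _ _ hj, ext1_gpath _ _ _ _ _ _ hj'] at h3
    exact h3
  have h1 : n₁ + n₂ + 1 = m₁ + m₂ + 1 := congrArg Sigma.fst h
  have hn : n₁ = m₁ := by
    by_contra hne
    rcases Nat.lt_or_ge n₁ m₁ with hlt | hge
    · have h4 := h2 (n₁ + 1) (by omega) (by omega)
      rw [glue_left m₁ m₂ r₁ r₂ (by omega : n₁ + 1 ≤ m₁)] at h4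
      have h5 := glue_right n₁ n₂ q₁ q₂ 0
      rw [add_zero] at h5
      rw [h5] at h4
      simp at h4
    · have hlt : m₁ < n₁ := by omega
      have h4 := h2 (m₁ + 1) (by omega) (by omega)
      rw [glue_left n₁ n₂ q₁ q₂ (by omega : m₁ + 1 ≤ n₁)] at h4
      have h5 := glue_right m₁ m₂ r₁ r₂ 0
      rw [add_zero] at h5
      rw [h5] at h4
      simp at h4
  subst hn
  have hn2 : n₂ = m₂ := by omega
  subst hn2
  have e1 : q₁ = r₁ := by
    funext i
    have h4 := h2 i.1 (by have := i.isLt; omega) (by have := i.isLt; omega)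
    rw [glue_left _ _ _ _ (Nat.lt_succ_iff.mp i.isLt),
      glue_left _ _ _ _ (Nat.lt_succ_iff.mp i.isLt), ext1_fin, ext1_fin] at h4
    exact Sum.inl.inj h4
  have e2 : q₂ = r₂ := by
    funext i
    have h4 := h2 (n₁ + 1 + i.1) (by have := i.isLt; omega) (by have := i.isLt; omega)
    rw [glue_right, glue_right, ext1_fin, ext1_fin] at h4
    exact Sum.inr.inj h4
  subst e1
  subst e2
  rfl

lemma support_sub (A₁ A₂ : WA V) (σ : V → ℕ) :
    Function.support (pfn A₁ A₂ σ) ⊆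
      Set.range (fun y : Function.support (qfn A₁ A₂ σ) => embed A₁ A₂ σ y.1) := by
  rintro ⟨n, ⟨p, hp⟩⟩ hx
  have hW : (A₁.concat A₂).pathWeight p ≠ 0 := hx
  obtain ⟨n₁, n₂, q₁, q₂, hn, hpt⟩ := decompose A₁ A₂ p hW
  subst hn
  have hpg : p = gpath A₁ A₂ n₁ n₂ q₁ q₂ := funext fun i => hpt i
  subst hpg
  have hcond : A₁.parikh q₁ + A₂.parikh q₂ = σ := by
    rw [← parikh_gpath A₁ A₂ n₁ n₂ q₁ q₂]; exact hp
  refine ⟨⟨⟨n₁, n₂, ⟨(q₁, q₂), hcond⟩⟩, ?_⟩, ?_⟩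
  · show A₁.pathWeight q₁ * A₂.pathWeight q₂ ≠ 0
    rw [← pathWeight_gpath A₁ A₂ n₁ n₂ q₁ q₂]
    exact hW
  · rfl

lemma hmul_tsum {ι κ : Type} (f : ι → ℝ≥0∞) (g : κ → ℝ≥0∞) :
    (∑' i, f i) * (∑' j, g j) = ∑' (i) (j), f i * g j := by
  rw [← ENNReal.tsum_mul_right]
  exact tsum_congr fun i => (ENNReal.tsum_mul_left).symm

lemma behavior_ite (A : WA V) (τ : V → ℕ) :
    A.behavior τ =
      ∑' (n : ℕ) (q : Fin (n + 1) → A.Q),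
        (if A.parikh q = τ then A.pathWeight q else 0) := by
  rw [WA.behavior]
  refine tsum_congr fun n => ?_
  have hs := tsum_subtype {q : Fin (n + 1) → A.Q | A.parikh q = τ} (fun q => A.pathWeight q)
  rw [show (∑' (p : {p : Fin (n + 1) → A.Q // A.parikh p = τ}), A.pathWeight p.1) =
      ∑' (x : ↑{q : Fin (n + 1) → A.Q | A.parikh q = τ}), A.pathWeight x.1 from rfl, hs]
  exact tsum_congr fun q => by
    simp [Set.indicator_apply, Set.mem_setOf_eq]

end ConcatAux3
/-- the behavior of the concatenation is the convolution of the behaviors. -/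
theorem stmt_5 (V : Type) [Fintype V] [DecidableEq V] (A₁ A₂ : WA V) (σ : V → ℕ) :
    (A₁.concat A₂).behavior σ =
      ∑' p : {p : (V → ℕ) × (V → ℕ) // p.1 + p.2 = σ},
        A₁.behavior p.1.1 * A₂.behavior p.1.2 := by
  classical
  have hL : (A₁.concat A₂).behavior σ = ∑' x : PIdx A₁ A₂ σ, pfn A₁ A₂ σ x := by
    rw [WA.behavior]
    exact (ENNReal.tsum_sigma' (pfn A₁ A₂ σ)).symm
  have hB : ∑' x : PIdx A₁ A₂ σ, pfn A₁ A₂ σ x = ∑' y : QIdx A₁ A₂ σ, qfn A₁ A₂ σ y := by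
    refine tsum_eq_tsum_of_ne_zero_bij
      (fun y : Function.support (qfn A₁ A₂ σ) => embed A₁ A₂ σ y.1) ?_
      (support_sub A₁ A₂ σ) ?_
    · intro x y hxy
      exact Subtype.ext (embed_inj A₁ A₂ σ hxy)
    · intro y
      exact pfn_embed A₁ A₂ σ y.1
  have hC : ∑' y : QIdx A₁ A₂ σ, qfn A₁ A₂ σ y =
      ∑' (n₁ : ℕ) (n₂ : ℕ) (q₁ : Fin (n₁ + 1) → A₁.Q) (q₂ : Fin (n₂ + 1) → A₂.Q),
        (if A₁.parikh q₁ + A₂.parikh q₂ = σ then A₁.pathWeight q₁ * A₂.pathWeight q₂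
          else 0) := by
    rw [ENNReal.tsum_sigma' (qfn A₁ A₂ σ)]
    refine tsum_congr fun n₁ => ?_
    rw [ENNReal.tsum_sigma']
    refine tsum_congr fun n₂ => ?_
    have hs := tsum_subtype
      {q : (Fin (n₁ + 1) → A₁.Q) × (Fin (n₂ + 1) → A₂.Q) |
        A₁.parikh q.1 + A₂.parikh q.2 = σ}
      (fun q => A₁.pathWeight q.1 * A₂.pathWeight q.2)
    rw [show (∑' (q : {q : (Fin (n₁ + 1) → A₁.Q) × (Fin (n₂ + 1) → A₂.Q) //
          A₁.parikh q.1 + A₂.parikh q.2 = σ}), qfn A₁ A₂ σ ⟨n₁, n₂, q⟩) =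
        ∑' (x : ↑{q : (Fin (n₁ + 1) → A₁.Q) × (Fin (n₂ + 1) → A₂.Q) |
          A₁.parikh q.1 + A₂.parikh q.2 = σ}),
          A₁.pathWeight x.1.1 * A₂.pathWeight x.1.2 from rfl, hs]
    rw [ENNReal.tsum_prod']
    refine tsum_congr fun q₁ => tsum_congr fun q₂ => ?_
    simp [Set.indicator_apply, Set.mem_setOf_eq]
  have hR : (∑' p : {p : (V → ℕ) × (V → ℕ) // p.1 + p.2 = σ},
        A₁.behavior p.1.1 * A₂.behavior p.1.2) =
      ∑' (n₁ : ℕ) (n₂ : ℕ) (q₁ : Fin (n₁ + 1) → A₁.Q) (q₂ : Fin (n₂ + 1) → A₂.Q),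
        (if A₁.parikh q₁ + A₂.parikh q₂ = σ then A₁.pathWeight q₁ * A₂.pathWeight q₂
          else 0) := by
    have hs := tsum_subtype {p : (V → ℕ) × (V → ℕ) | p.1 + p.2 = σ}
      (fun p => A₁.behavior p.1 * A₂.behavior p.2)
    rw [show (∑' p : {p : (V → ℕ) × (V → ℕ) // p.1 + p.2 = σ},
          A₁.behavior p.1.1 * A₂.behavior p.1.2) =
        ∑' (x : ↑{p : (V → ℕ) × (V → ℕ) | p.1 + p.2 = σ}),
          A₁.behavior x.1.1 * A₂.behavior x.1.2 from rfl, hs]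
    have key : ∀ τ : (V → ℕ) × (V → ℕ),
        ({p : (V → ℕ) × (V → ℕ) | p.1 + p.2 = σ}.indicator
          (fun p => A₁.behavior p.1 * A₂.behavior p.2) τ)
          = ∑' (n₁ : ℕ) (n₂ : ℕ) (q₁ : Fin (n₁ + 1) → A₁.Q) (q₂ : Fin (n₂ + 1) → A₂.Q),
              (if τ.1 + τ.2 = σ then
                (if A₁.parikh q₁ = τ.1 then A₁.pathWeight q₁ else 0) *
                  (if A₂.parikh q₂ = τ.2 then A₂.pathWeight q₂ else 0)
               else 0) := by
      intro τ
      rw [Set.indicator_apply]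
      by_cases hτ : τ.1 + τ.2 = σ
      · rw [if_pos (Set.mem_setOf_eq ▸ hτ)]
        rw [behavior_ite A₁ τ.1, behavior_ite A₂ τ.2]
        rw [hmul_tsum]
        refine tsum_congr fun n₁ => ?_
        refine tsum_congr fun n₂ => ?_
        rw [hmul_tsum]
        refine tsum_congr fun q₁ => ?_
        refine tsum_congr fun q₂ => ?_
        rw [if_pos hτ]
      · rw [if_neg (by simpa [Set.mem_setOf_eq] using hτ)]
        simp [hτ]
    rw [tsum_congr key]
    rw [ENNReal.tsum_comm]
    refine tsum_congr fun n₁ => ?_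
    rw [ENNReal.tsum_comm]
    refine tsum_congr fun n₂ => ?_
    rw [ENNReal.tsum_comm]
    refine tsum_congr fun q₁ => ?_
    rw [ENNReal.tsum_comm]
    refine tsum_congr fun q₂ => ?_
    rw [tsum_eq_single ((A₁.parikh q₁, A₂.parikh q₂) : (V → ℕ) × (V → ℕ)) ?_]
    · by_cases h : A₁.parikh q₁ + A₂.parikh q₂ = σ <;> simp [h]
    · intro τ hτ
      by_cases h1 : A₁.parikh q₁ = τ.1
      · by_cases h2 : A₂.parikh q₂ = τ.2
        · exact absurd (Prod.ext h1.symm h2.symm) hτ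
        · simp [h2]
      · simp [h1]
  rw [hL, hB, hC, ← hR]
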